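/- (Deletion lemma) Let Y be an N-element set, S a family of s-element subsets of Y, q < N/4 a positive integer, and T > 1 a real. Then for all but at most T^{−q/s}·C(N, m) of the m-element subsets Y_m ⊆ Y, there exists X ⊆ Y_m with |X| ≤ q such that Y_m \ X contains at most 2^s·T·|S|·(m/N)^s members of S. -/

import Mathlib

lemma descFac_ratio (j : ℕ) : ∀ {m N : ℕ}, m ≤ N →
    m.descFactorial j * N ^ j ≤ N.descFactorial j * m ^ j := by
  induction j with
  | zero => simp
  | succ j ih =>
    intro m N h
    have h1 : (m - j) * N ≤ (N - j) * m := by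
      have h2 : j * m ≤ j * N := Nat.mul_le_mul_left _ h
      rw [Nat.sub_mul, Nat.sub_mul, Nat.mul_comm N m]
      exact Nat.sub_le_sub_left h2 _
    calc m.descFactorial (j+1) * N ^ (j+1)
        = (m - j) * N * (m.descFactorial j * N ^ j) := by
          rw [Nat.descFactorial_succ, pow_succ]; ring
      _ ≤ (N - j) * m * (N.descFactorial j * m ^ j) :=
          Nat.mul_le_mul h1 (ih h)
      _ = N.descFactorial (j+1) * m ^ (j+1) := by
          rw [Nat.descFactorial_succ, pow_succ]; ring

lemma choose_ratio {m N : ℕ} (j : ℕ) (h : m ≤ N) :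
    m.choose j * N ^ j ≤ N.choose j * m ^ j := by
  have key := descFac_ratio j h
  rw [Nat.descFactorial_eq_factorial_mul_choose, Nat.descFactorial_eq_factorial_mul_choose] at key
  refine Nat.le_of_mul_le_mul_left ?_ (Nat.factorial_pos j)
  calc Nat.factorial j * (m.choose j * N ^ j)
      = Nat.factorial j * m.choose j * N ^ j := by ring
    _ ≤ Nat.factorial j * N.choose j * m ^ j := key
    _ = Nat.factorial j * (N.choose j * m ^ j) := by ring

open Finset in
lemma tuple_count {α : Type*} [DecidableEq α] (𝒮 : Finset (Finset α)) (Ym : Finset α)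
    (s q n : ℕ)
    (hcard : ∀ A ∈ 𝒮, A.card = s)
    (hbad : ∀ X ⊆ Ym, X.card ≤ q → n ≤ (𝒮.filter fun A => A ⊆ Ym \ X).card) :
    ∀ (k : ℕ), (k - 1) * s ≤ q → ∀ j ≤ k, n ^ j ≤
      ((Fintype.piFinset fun _ : Fin j => 𝒮).filter
        (fun f => (∀ i, f i ⊆ Ym) ∧ ∀ i₁ i₂, i₁ ≠ i₂ → Disjoint (f i₁) (f i₂))).card := by
  intro k hks j
  induction j with
  | zero =>
    intro _
    have : (default : Fin 0 → Finset α) ∈ (Fintype.piFinset fun _ : Fin 0 => 𝒮).filter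
        (fun f => (∀ i, f i ⊆ Ym) ∧ ∀ i₁ i₂, i₁ ≠ i₂ → Disjoint (f i₁) (f i₂)) := by
      simp [Fintype.mem_piFinset]
      exact funext fun i => i.elim0
    simpa using Finset.card_pos.2 ⟨_, this⟩
  | succ j ih =>
    intro hjk
    set Tj := (Fintype.piFinset fun _ : Fin j => 𝒮).filter
        (fun f => (∀ i, f i ⊆ Ym) ∧ ∀ i₁ i₂, i₁ ≠ i₂ → Disjoint (f i₁) (f i₂)) with hTj
    set Tj1 := (Fintype.piFinset fun _ : Fin (j+1) => 𝒮).filter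
        (fun f => (∀ i, f i ⊆ Ym) ∧ ∀ i₁ i₂, i₁ ≠ i₂ → Disjoint (f i₁) (f i₂)) with hTj1
    have hmap : ∀ f ∈ Tj1, (fun i : Fin j => f i.castSucc) ∈ Tj := by
      intro f hf
      rw [hTj1, mem_filter, Fintype.mem_piFinset] at hf
      rw [hTj, mem_filter, Fintype.mem_piFinset]
      exact ⟨fun i => hf.1 _, fun i => hf.2.1 _, fun i₁ i₂ hne =>
        hf.2.2 _ _ (by simpa [Fin.castSucc_inj] using hne)⟩
    have hfib : ∀ g ∈ Tj, n ≤ (Tj1.filter fun f => (fun i : Fin j => f i.castSucc) = g).card := by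
      intro g hg
      rw [hTj, mem_filter, Fintype.mem_piFinset] at hg
      obtain ⟨hgS, hgY, hgD⟩ := hg
      set X : Finset α := Finset.univ.biUnion g with hX
      have hXY : X ⊆ Ym := Finset.biUnion_subset.2 fun i _ => hgY i
      have hXq : X.card ≤ q := by
        calc X.card ≤ ∑ i : Fin j, (g i).card := Finset.card_biUnion_le
          _ = j * s := by
            rw [Finset.sum_congr rfl fun i _ => hcard _ (hgS i)]
            simp [mul_comm]
          _ ≤ (k - 1) * s := Nat.mul_le_mul_right _ (by omega)
          _ ≤ q := hks
      have hn := hbad X hXY hXq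
      refine hn.trans (Finset.card_le_card_of_injOn (fun A => Fin.snoc g A) ?_ ?_)
      · intro A hA
        rw [Finset.mem_coe, mem_filter] at hA
        obtain ⟨hAS, hAY⟩ := hA
        have hAdis : ∀ i : Fin j, Disjoint A (g i) := by
          intro i
          rw [Finset.disjoint_left]
          intro a ha hag
          exact (Finset.mem_sdiff.1 (hAY ha)).2
            (Finset.mem_biUnion.2 ⟨i, Finset.mem_univ _, hag⟩)
        rw [Finset.mem_coe, mem_filter]
        refine ⟨?_, funext fun i => by simpa using Fin.snoc_castSucc g A i⟩
        rw [hTj1, mem_filter, Fintype.mem_piFinset]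
        refine ⟨fun i => ?_, fun i => ?_, fun i₁ i₂ hne => ?_⟩
        · rcases Fin.eq_castSucc_or_eq_last i with ⟨i', rfl⟩ | rfl
          · simp only [Fin.snoc_castSucc]; exact hgS i'
          · simp only [Fin.snoc_last]; exact hAS
        · rcases Fin.eq_castSucc_or_eq_last i with ⟨i', rfl⟩ | rfl
          · simp only [Fin.snoc_castSucc]; exact hgY i'
          · simp only [Fin.snoc_last]; exact hAY.trans Finset.sdiff_subset
        · rcases Fin.eq_castSucc_or_eq_last i₁ with ⟨i₁', rfl⟩ | rfl <;>
            rcases Fin.eq_castSucc_or_eq_last i₂ with ⟨i₂', rfl⟩ | rfl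
          · simp only [Fin.snoc_castSucc]
            exact hgD _ _ (by simpa [Fin.castSucc_inj] using hne)
          · simp only [Fin.snoc_castSucc, Fin.snoc_last]; exact (hAdis i₁').symm
          · simp only [Fin.snoc_castSucc, Fin.snoc_last]; exact hAdis i₂'
          · exact absurd rfl hne
      · intro A _ A' _ h
        have := congrFun h (Fin.last j)
        simpa [Fin.snoc_last] using this
    calc n ^ (j + 1) = n * n ^ j := by ring
      _ ≤ n * Tj.card := Nat.mul_le_mul_left _ (ih (by omega))
      _ = ∑ _g ∈ Tj, n := by rw [Finset.sum_const, smul_eq_mul, mul_comm]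
      _ ≤ ∑ g ∈ Tj, (Tj1.filter fun f => (fun i : Fin j => f i.castSucc) = g).card :=
          Finset.sum_le_sum hfib
      _ = Tj1.card := (Finset.card_eq_sum_card_fiberwise hmap).symm

open Finset in
lemma pair_count {α : Type*} [DecidableEq α] (Y : Finset α) (𝒮 : Finset (Finset α))
    (s k N m : ℕ) (hY : Y.card = N)
    (h𝒮 : ∀ A ∈ 𝒮, A ⊆ Y ∧ A.card = s)
    (B : Finset (Finset α)) (hB : ∀ Ym ∈ B, Ym ⊆ Y ∧ Ym.card = m) :
    ∑ Ym ∈ B, ((Fintype.piFinset fun _ : Fin k => 𝒮).filter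
        (fun f => (∀ i, f i ⊆ Ym) ∧ ∀ i₁ i₂, i₁ ≠ i₂ → Disjoint (f i₁) (f i₂))).card
      ≤ 𝒮.card ^ k * (N - k * s).choose (m - k * s) := by
  classical
  set allT := Fintype.piFinset fun _ : Fin k => 𝒮 with hallT
  have swap : ∑ Ym ∈ B, (allT.filter
        (fun f => (∀ i, f i ⊆ Ym) ∧ ∀ i₁ i₂, i₁ ≠ i₂ → Disjoint (f i₁) (f i₂))).card
      = ∑ f ∈ allT, (B.filter
        (fun Ym => (∀ i, f i ⊆ Ym) ∧ ∀ i₁ i₂, i₁ ≠ i₂ → Disjoint (f i₁) (f i₂))).card := by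
    simp only [Finset.card_filter]
    exact Finset.sum_comm
  rw [swap]
  have hbound : ∀ f ∈ allT, (B.filter
        (fun Ym => (∀ i, f i ⊆ Ym) ∧ ∀ i₁ i₂, i₁ ≠ i₂ → Disjoint (f i₁) (f i₂))).card
      ≤ (N - k * s).choose (m - k * s) := by
    intro f hf
    rw [hallT, Fintype.mem_piFinset] at hf
    by_cases hd : ∀ i₁ i₂ : Fin k, i₁ ≠ i₂ → Disjoint (f i₁) (f i₂)
    · set U : Finset α := Finset.univ.biUnion f with hU
      have hUY : U ⊆ Y := Finset.biUnion_subset.2 fun i _ => (h𝒮 _ (hf i)).1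
      have hUcard : U.card = k * s := by
        rw [hU, Finset.card_biUnion (fun i _ i' _ hne => hd i i' hne)]
        rw [Finset.sum_congr rfl fun i _ => (h𝒮 _ (hf i)).2]
        simp [mul_comm]
      calc (B.filter (fun Ym => (∀ i, f i ⊆ Ym) ∧ ∀ i₁ i₂, i₁ ≠ i₂ → Disjoint (f i₁) (f i₂))).card
          ≤ ((Y \ U).powersetCard (m - k * s)).card := by
            refine Finset.card_le_card_of_injOn (fun Ym => Ym \ U) ?_ ?_
            · intro Ym hYm
              rw [Finset.mem_coe, mem_filter] at hYm
              obtain ⟨hYmB, hfY, -⟩ := hYm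
              have hUYm : U ⊆ Ym := Finset.biUnion_subset.2 fun i _ => hfY i
              rw [Finset.mem_coe, Finset.mem_powersetCard]
              exact ⟨Finset.sdiff_subset_sdiff (hB _ hYmB).1 (le_refl U),
                by rw [Finset.card_sdiff_of_subset hUYm, hUcard, (hB _ hYmB).2]⟩
            · intro Ym hYm Ym' hYm' h
              rw [Finset.coe_filter] at hYm hYm'
              obtain ⟨hYmB, hfY, -⟩ := hYm
              obtain ⟨hYmB', hfY', -⟩ := hYm'
              have h1 : U ⊆ Ym := Finset.biUnion_subset.2 fun i _ => hfY i
              have h2 : U ⊆ Ym' := Finset.biUnion_subset.2 fun i _ => hfY' i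
              have h' : Ym \ U = Ym' \ U := h
              rw [← Finset.sdiff_union_of_subset h1, ← Finset.sdiff_union_of_subset h2, h']
        _ = (N - k * s).choose (m - k * s) := by
            rw [Finset.card_powersetCard, Finset.card_sdiff_of_subset hUY, hY, hUcard]
    · rw [Finset.filter_eq_empty_iff.2 (fun Ym _ h => hd h.2)]
      simp
  calc ∑ f ∈ allT, (B.filter
        (fun Ym => (∀ i, f i ⊆ Ym) ∧ ∀ i₁ i₂, i₁ ≠ i₂ → Disjoint (f i₁) (f i₂))).card
      ≤ ∑ _f ∈ allT, (N - k * s).choose (m - k * s) := Finset.sum_le_sum hbound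
    _ = 𝒮.card ^ k * (N - k * s).choose (m - k * s) := by
        rw [Finset.sum_const, smul_eq_mul, hallT, Fintype.card_piFinset]
        simp

set_option maxHeartbeats 400000 in
open scoped Classical in
/-- Deletion lemma: for all but at most `T^(−q/s)·C(N, m)` of the `m`-element subsets
`Y_m ⊆ Y`, there is `X ⊆ Y_m` with `|X| ≤ q` such that `Y_m \ X` contains at most
`2^s·T·|𝒮|·(m/N)^s` members of the family `𝒮` of `s`-element subsets of `Y`. -/
theorem stmt_10 {α : Type*} [DecidableEq α] (Y : Finset α) (N s m q : ℕ) (T : ℝ)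
    (hY : Y.card = N) (hq : 0 < q) (hqN : 4 * q < N) (hT : 1 < T)
    (𝒮 : Finset (Finset α)) (h𝒮 : ∀ A ∈ 𝒮, A ⊆ Y ∧ A.card = s) :
    (((Y.powerset.filter (fun Ym => Ym.card = m ∧
        ¬ ∃ X ⊆ Ym, X.card ≤ q ∧
          (((𝒮.filter (fun A => A ⊆ Ym \ X)).card : ℝ) ≤
            2 ^ s * T * (𝒮.card : ℝ) * ((m : ℝ) / (N : ℝ)) ^ s))).card : ℝ)) ≤
      T ^ (-(q : ℝ) / (s : ℝ)) * (N.choose m : ℝ) := by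
  have hT0 : (0:ℝ) < T := one_pos.trans hT
  have hRHS0 : (0:ℝ) ≤ T ^ (-(q : ℝ) / (s : ℝ)) * (N.choose m : ℝ) := by positivity
  set B := Y.powerset.filter (fun Ym => Ym.card = m ∧
        ¬ ∃ X ⊆ Ym, X.card ≤ q ∧
          (((𝒮.filter (fun A => A ⊆ Ym \ X)).card : ℝ) ≤
            2 ^ s * T * (𝒮.card : ℝ) * ((m : ℝ) / (N : ℝ)) ^ s)) with hBdef
  -- helper to close goal when B is empty
  have hempty_case : (∀ Ym ∈ B, False) → (B.card : ℝ) ≤ T ^ (-(q : ℝ) / (s : ℝ)) * (N.choose m : ℝ) := by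
    intro h
    have : B = ∅ := Finset.eq_empty_of_forall_notMem h
    rw [this]
    simpa using hRHS0
  have hNpos : 0 < N := by omega
  -- degenerate cases
  by_cases hS0 : 𝒮 = ∅
  · refine hempty_case fun Ym hYm => ?_
    rw [hBdef, Finset.mem_filter] at hYm
    exact hYm.2.2 ⟨∅, Finset.empty_subset _, by simpa using hq.le, by simp [hS0]⟩
  by_cases hs0 : s = 0
  · refine hempty_case fun Ym hYm => ?_
    rw [hBdef, Finset.mem_filter] at hYm
    refine hYm.2.2 ⟨∅, Finset.empty_subset _, by simpa using hq.le, ?_⟩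
    subst hs0
    simp only [pow_zero, one_mul, mul_one]
    calc ((𝒮.filter (fun A => A ⊆ Ym \ ∅)).card : ℝ) ≤ (𝒮.card : ℝ) := by
          exact_mod_cast Finset.card_filter_le _ _
      _ ≤ T * 𝒮.card := le_mul_of_one_le_left (by positivity) hT.le
  have hs : 0 < s := Nat.pos_of_ne_zero hs0
  by_cases hm0 : m = 0
  · refine hempty_case fun Ym hYm => ?_
    rw [hBdef, Finset.mem_filter] at hYm
    have hYme : Ym = ∅ := Finset.card_eq_zero.1 (hYm.2.1.trans hm0)
    refine hYm.2.2 ⟨∅, Finset.empty_subset _, by simpa using hq.le, ?_⟩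
    have : 𝒮.filter (fun A => A ⊆ Ym \ ∅) = ∅ := by
      rw [Finset.filter_eq_empty_iff]
      intro A hA hsub
      have : A = ∅ := Finset.subset_empty.1 (by simpa [hYme] using hsub)
      have hcs := (h𝒮 A hA).2
      rw [this] at hcs
      simp at hcs
      omega
    rw [this]
    simp only [Finset.card_empty, Nat.cast_zero]
    positivity
  have hm : 0 < m := Nat.pos_of_ne_zero hm0
  have hSne : 𝒮.Nonempty := Finset.nonempty_of_ne_empty hS0
  by_cases hmN : m ≤ N
  swap
  · refine hempty_case fun Ym hYm => ?_
    rw [hBdef, Finset.mem_filter, Finset.mem_powerset] at hYm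
    have := Finset.card_le_card hYm.1
    rw [hYm.2.1, hY] at this
    omega
  -- main case
  set t : ℝ := 2 ^ s * T * (𝒮.card : ℝ) * ((m : ℝ) / (N : ℝ)) ^ s with htdef
  have hScard : 0 < 𝒮.card := Finset.card_pos.2 hSne
  have hNR : (0:ℝ) < N := by exact_mod_cast hNpos
  have hmR : (0:ℝ) < m := by exact_mod_cast hm
  have ht0 : 0 < t := by
    rw [htdef]
    have : (0:ℝ) < (𝒮.card : ℝ) := by exact_mod_cast hScard
    positivity
  obtain ⟨n, hndef⟩ : ∃ n : ℕ, n = Nat.floor t + 1 := ⟨_, rfl⟩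
  -- the ceiling k of q/s
  obtain ⟨k, hk1, hk2⟩ : ∃ k : ℕ, q ≤ s * k ∧ s * k ≤ q + s - 1 := by
    refine ⟨(q + s - 1) / s, ?_, ?_⟩
    · have h1 := Nat.div_add_mod (q + s - 1) s
      have h2 := Nat.mod_lt (q + s - 1) hs
      generalize hK : s * ((q + s - 1) / s) = K at *
      omega
    · have h1 := Nat.div_add_mod (q + s - 1) s
      generalize hK : s * ((q + s - 1) / s) = K at *
      omega
  have hks : (k - 1) * s ≤ q := by
    have h3 : (k - 1) * s = s * k - s := by
      rw [Nat.sub_mul, one_mul, Nat.mul_comm]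
    rw [h3]
    generalize hK : s * k = K at *
    omega
  obtain ⟨j, hjdef⟩ : ∃ j : ℕ, j = s * k := ⟨_, rfl⟩
  -- badness gives many extensions
  have hbadYm : ∀ Ym ∈ B, ∀ X ⊆ Ym, X.card ≤ q →
      n ≤ (𝒮.filter fun A => A ⊆ Ym \ X).card := by
    intro Ym hYm X hX hXq
    rw [hBdef, Finset.mem_filter] at hYm
    have hne := hYm.2.2
    push_neg at hne
    have hlt := hne X hX hXq
    have : Nat.floor t < (𝒮.filter fun A => A ⊆ Ym \ X).card :=
      (Nat.floor_lt ht0.le).2 hlt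
    omega
  -- lower bound on tuples for each bad Ym
  have hlow : ∀ Ym ∈ B, n ^ k ≤
      ((Fintype.piFinset fun _ : Fin k => 𝒮).filter
        (fun f => (∀ i, f i ⊆ Ym) ∧ ∀ i₁ i₂, i₁ ≠ i₂ → Disjoint (f i₁) (f i₂))).card := by
    intro Ym hYm
    exact tuple_count 𝒮 Ym s q n (fun A hA => (h𝒮 A hA).2) (hbadYm Ym hYm) k hks k le_rfl
  have hBmem : ∀ Ym ∈ B, Ym ⊆ Y ∧ Ym.card = m := by
    intro Ym hYm
    rw [hBdef, Finset.mem_filter, Finset.mem_powerset] at hYm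
    exact ⟨hYm.1, hYm.2.1⟩
  -- case k*s > m : B is empty
  by_cases hjm : j ≤ m
  swap
  · refine hempty_case fun Ym hYm => ?_
    have h1 := hlow Ym hYm
    have hn1 : 0 < n := hndef ▸ Nat.succ_pos _
    have : 0 < ((Fintype.piFinset fun _ : Fin k => 𝒮).filter
        (fun f => (∀ i, f i ⊆ Ym) ∧ ∀ i₁ i₂, i₁ ≠ i₂ → Disjoint (f i₁) (f i₂))).card :=
      lt_of_lt_of_le (pow_pos hn1 k) h1
    obtain ⟨f, hf⟩ := Finset.card_pos.1 this
    rw [Finset.mem_filter, Fintype.mem_piFinset] at hf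
    obtain ⟨hfS, hfY, hfD⟩ := hf
    have hUcard : (Finset.univ.biUnion f).card = k * s := by
      rw [Finset.card_biUnion (fun i _ i' _ hne => hfD i i' hne)]
      rw [Finset.sum_congr rfl fun i _ => (h𝒮 _ (hfS i)).2]
      simp [mul_comm]
    have hUsub : (Finset.univ.biUnion f) ⊆ Ym := Finset.biUnion_subset.2 fun i _ => hfY i
    have := Finset.card_le_card hUsub
    rw [hUcard, (hBmem Ym hYm).2] at this
    exact hjm (by rw [hjdef, mul_comm s k]; exact this)
  -- combine: n^k * B.card ≤ 𝒮.card^k * choose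
  have hsum : n ^ k * B.card ≤ 𝒮.card ^ k * (N - j).choose (m - j) := by
    calc n ^ k * B.card = ∑ _Ym ∈ B, n ^ k := by rw [Finset.sum_const, smul_eq_mul, mul_comm]
      _ ≤ ∑ Ym ∈ B, ((Fintype.piFinset fun _ : Fin k => 𝒮).filter
          (fun f => (∀ i, f i ⊆ Ym) ∧ ∀ i₁ i₂, i₁ ≠ i₂ → Disjoint (f i₁) (f i₂))).card :=
        Finset.sum_le_sum hlow
      _ ≤ 𝒮.card ^ k * (N - k * s).choose (m - k * s) :=
        pair_count Y 𝒮 s k N m hY h𝒮 B hBmem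
      _ = 𝒮.card ^ k * (N - j).choose (m - j) := by rw [hjdef, mul_comm s k]
  -- cast to ℝ and conclude
  have hjN : j ≤ N := hjm.trans hmN
  have hch1 : (N.choose m : ℝ) * (m.choose j : ℝ)
      = (N.choose j : ℝ) * ((N - j).choose (m - j) : ℝ) := by
    exact_mod_cast Nat.choose_mul (n := N) hjm
  have hch2 : (m.choose j : ℝ) * (N : ℝ) ^ j ≤ (N.choose j : ℝ) * (m : ℝ) ^ j := by
    exact_mod_cast choose_ratio j hmN
  have hchNpos : (0:ℝ) < (N.choose j : ℝ) := by exact_mod_cast Nat.choose_pos hjN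
  have hcNm0 : (0:ℝ) ≤ (N.choose m : ℝ) := by positivity
  have hC1 : ((N - j).choose (m - j) : ℝ) ≤ (N.choose m : ℝ) * ((m:ℝ)/(N:ℝ)) ^ j := by
    have key : ((N - j).choose (m - j) : ℝ) * (N:ℝ)^j ≤ (N.choose m : ℝ) * (m:ℝ)^j := by
      rw [← mul_le_mul_iff_right₀ hchNpos]
      calc (N.choose j : ℝ) * (((N - j).choose (m - j) : ℝ) * (N:ℝ)^j)
          = ((N.choose j : ℝ) * ((N - j).choose (m - j) : ℝ)) * (N:ℝ)^j := by ring
        _ = ((N.choose m : ℝ) * (m.choose j : ℝ)) * (N:ℝ)^j := by rw [← hch1]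
        _ = (N.choose m : ℝ) * ((m.choose j : ℝ) * (N:ℝ)^j) := by ring
        _ ≤ (N.choose m : ℝ) * ((N.choose j : ℝ) * (m:ℝ)^j) :=
            mul_le_mul_of_nonneg_left hch2 hcNm0
        _ = (N.choose j : ℝ) * ((N.choose m : ℝ) * (m:ℝ)^j) := by ring
    rw [div_pow, ← mul_div_assoc, le_div_iff₀ (pow_pos hNR j)]
    exact key
  have hmain : (n:ℝ)^k * (B.card : ℝ) ≤ (𝒮.card : ℝ)^k * ((N - j).choose (m - j) : ℝ) := by
    exact_mod_cast hsum
  have htn : t ≤ (n:ℝ) := by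
    rw [hndef]; push_cast; exact (Nat.lt_floor_add_one t).le
  have hB0 : (0:ℝ) ≤ (B.card : ℝ) := by positivity
  have hchain : t^k * (B.card:ℝ) ≤ (𝒮.card:ℝ)^k * ((N.choose m : ℝ) * ((m:ℝ)/(N:ℝ))^j) := by
    calc t^k * (B.card:ℝ) ≤ (n:ℝ)^k * (B.card:ℝ) :=
          mul_le_mul_of_nonneg_right (pow_le_pow_left₀ ht0.le htn k) hB0
      _ ≤ (𝒮.card:ℝ)^k * ((N - j).choose (m - j) : ℝ) := hmain
      _ ≤ (𝒮.card:ℝ)^k * ((N.choose m:ℝ) * ((m:ℝ)/(N:ℝ))^j) :=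
          mul_le_mul_of_nonneg_left hC1 (pow_nonneg (Nat.cast_nonneg _) k)
  have htexp : t^k = 2^j * T^k * (𝒮.card:ℝ)^k * ((m:ℝ)/(N:ℝ))^j := by
    rw [htdef, hjdef, mul_pow, mul_pow, mul_pow, ← pow_mul, ← pow_mul]
  have hpos2 : (0:ℝ) < (𝒮.card:ℝ)^k * ((m:ℝ)/(N:ℝ))^j := by
    have : (0:ℝ) < (𝒮.card : ℝ) := by exact_mod_cast hScard
    positivity
  have hfin : 2^j * T^k * (B.card:ℝ) ≤ (N.choose m : ℝ) := by
    rw [← mul_le_mul_iff_left₀ hpos2]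
    calc 2^j * T^k * (B.card:ℝ) * ((𝒮.card:ℝ)^k * ((m:ℝ)/(N:ℝ))^j)
        = t^k * (B.card:ℝ) := by rw [htexp]; ring
      _ ≤ (𝒮.card:ℝ)^k * ((N.choose m:ℝ) * ((m:ℝ)/(N:ℝ))^j) := hchain
      _ = (N.choose m:ℝ) * ((𝒮.card:ℝ)^k * ((m:ℝ)/(N:ℝ))^j) := by ring
  have hsR : (0:ℝ) < (s:ℝ) := by exact_mod_cast hs
  have hq_le : (q:ℝ)/(s:ℝ) ≤ (k:ℝ) := by
    rw [div_le_iff₀ hsR]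
    calc (q:ℝ) ≤ ((s*k : ℕ) : ℝ) := by exact_mod_cast hk1
      _ = (k:ℝ) * (s:ℝ) := by push_cast; ring
  have hTk : T ^ ((q:ℝ)/(s:ℝ)) ≤ 2^j * T^k := by
    calc T ^ ((q:ℝ)/(s:ℝ)) ≤ T ^ ((k:ℕ):ℝ) := Real.rpow_le_rpow_of_exponent_le hT.le hq_le
      _ = T ^ k := Real.rpow_natCast T k
      _ ≤ 2^j * T^k := le_mul_of_one_le_left (by positivity) (one_le_pow₀ one_le_two)
  have hTq0 : (0:ℝ) < T ^ ((q:ℝ)/(s:ℝ)) := Real.rpow_pos_of_pos hT0 _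
  have hBle : (B.card : ℝ) ≤ (N.choose m:ℝ) / (2^j*T^k) := by
    rw [le_div_iff₀ (by positivity)]
    calc (B.card:ℝ) * (2^j*T^k) = 2^j*T^k*(B.card:ℝ) := by ring
      _ ≤ (N.choose m : ℝ) := hfin
  calc (B.card : ℝ) ≤ (N.choose m:ℝ) / (2^j*T^k) := hBle
    _ ≤ (N.choose m:ℝ) / T ^ ((q:ℝ)/(s:ℝ)) := by
        rw [div_le_div_iff₀ (by positivity) hTq0]
        exact mul_le_mul_of_nonneg_left hTk hcNm0
    _ = T ^ (-(q:ℝ)/(s:ℝ)) * (N.choose m:ℝ) := by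
        rw [neg_div, Real.rpow_neg hT0.le, div_eq_mul_inv, mul_comm]
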